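/- Suppose t ∈ {0,1,…,m} is such that for every nonempty u′ ⊆ {1,…,s} and every k′ ∈ ℕ₀^{|u′|} with 0 ≤ k′_j ≤ m for all j and Σ_{j∈u′} k′_j ≤ m − t, the matrix C_{u′,k′} has full row rank over F₂ (i.e., the digital net is a (t,m,s)-net in base 2). Then for every nonempty u ⊆ {1,…,s} and every k ∈ {0,1,…,m−1}^{|u|}, Γ_{u,k} ≤ 2^{t + |u| − 1}. -/

import Mathlib

open Finset

noncomputable section

/-- The bit vector `i⃗ ∈ F₂^m` of the integer `i = Σ_{ℓ=1}^m i_ℓ 2^{ℓ-1}`. -/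
def bvec (m : ℕ) (i : ℕ) : Fin m → ZMod 2 :=
  fun ℓ => if Nat.testBit i ℓ.1 then 1 else 0

/-- The `(r+1)`-st row (i.e. `r` with 0-indexing) of an `m × m` matrix over `F₂`,
as a vector in `F₂^m`; junk value `0` if `r ≥ m` (never used under the hypotheses below). -/
def rowAt (m : ℕ) (A : Matrix (Fin m) (Fin m) (ZMod 2)) (r : ℕ) : Fin m → ZMod 2 :=
  fun ℓ => if h : r < m then A ⟨r, h⟩ ℓ else 0

/-- The stacked matrix `C_{u,k}`: for each `j ∈ u`, the first `k j` rows of `C j`. -/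
def stack {m s : ℕ} (C : Fin s → Matrix (Fin m) (Fin m) (ZMod 2))
    (u : Finset (Fin s)) (k : Fin s → ℕ) :
    Matrix ((j : {x // x ∈ u}) × Fin (k j.1)) (Fin m) (ZMod 2) :=
  fun p => rowAt m (C p.1.1) p.2.1

/-- `∇C_{u,k}`: the matrix whose rows are the `(k j + 1)`-st rows (1-indexed) of `C j`, `j ∈ u`. -/
def grad {m s : ℕ} (C : Fin s → Matrix (Fin m) (Fin m) (ZMod 2))
    (u : Finset (Fin s)) (k : Fin s → ℕ) :
    Matrix {x // x ∈ u} (Fin m) (ZMod 2) :=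
  fun j => rowAt m (C j.1) (k j.1)

/-- The coordinate `x_{ij} ∈ [0,1)` of the digital net generated by `C₁,…,C_s`:
`x_{ij} = Σ_{ℓ=1}^m y_ℓ 2^{-ℓ}` where `y = C_j · i⃗` over `F₂`. -/
def pt {m s : ℕ} (C : Fin s → Matrix (Fin m) (Fin m) (ZMod 2)) (i : ℕ) (j : Fin s) : ℝ :=
  ∑ ℓ : Fin m, (((C j).mulVec (bvec m i) ℓ).val : ℝ) / 2 ^ (ℓ.1 + 1)

/-- The factor `N`: with `M(x,x') = max{k ∈ ℕ₀ : ⌊2^k x⌋ = ⌊2^k x'⌋}` (the number of matching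
leading binary digits), `Nf x x' c` equals `1` if `M(x,x') > c` (equivalently the first `c+1`
binary digits match), `-1` if `M(x,x') = c` (the first `c` digits match but not `c+1`), and
`0` if `M(x,x') < c`. -/
def Nf (x x' : ℝ) (c : ℕ) : ℤ :=
  if ⌊(2:ℝ) ^ (c + 1) * x⌋ = ⌊(2:ℝ) ^ (c + 1) * x'⌋ then 1
  else if ⌊(2:ℝ) ^ c * x⌋ = ⌊(2:ℝ) ^ c * x'⌋ then -1
  else 0

/-- The gain coefficient `Γ_{u,k} = 2^{-m} Σ_{i=0}^{2^m-1} Σ_{i'=0}^{2^m-1} ∏_{j∈u} N_{i,i',j}`. -/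
def Gam {m s : ℕ} (C : Fin s → Matrix (Fin m) (Fin m) (ZMod 2))
    (u : Finset (Fin s)) (k : Fin s → ℕ) : ℚ :=
  (2 ^ m : ℚ)⁻¹ * ∑ i ∈ Finset.range (2 ^ m), ∑ i' ∈ Finset.range (2 ^ m),
      ∏ j ∈ u, (Nf (pt C i j) (pt C i' j) (k j) : ℚ)

/-! ### Auxiliary lemmas -/

lemma wsum_succ (c : ℕ) (y : ℕ → ℕ) :
    ∑ ℓ ∈ range (c+1), y ℓ * 2^(c-ℓ) = 2 * ∑ ℓ ∈ range c, y ℓ * 2^(c-1-ℓ) + y c := by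
  rw [Finset.sum_range_succ, Nat.sub_self, pow_zero, mul_one, Finset.mul_sum]
  congr 1
  refine Finset.sum_congr rfl fun ℓ hℓ => ?_
  have hℓ' : ℓ < c := Finset.mem_range.mp hℓ
  have : c - ℓ = (c - 1 - ℓ) + 1 := by omega
  rw [this, pow_succ]; ring

lemma wsum_lt (c : ℕ) (y : ℕ → ℕ) (hy : ∀ ℓ, y ℓ ≤ 1) :
    ∑ ℓ ∈ range c, y ℓ * 2^(c-1-ℓ) < 2^c := by
  induction c with
  | zero => simp
  | succ n ih =>
    have h := wsum_succ n y
    simp only [Nat.add_sub_cancel] at h ⊢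
    rw [h]
    have := hy n
    have : 2^(n+1) = 2 * 2^n := by ring
    omega

lemma wsum_inj (c : ℕ) (y y' : ℕ → ℕ) (hy : ∀ ℓ, y ℓ ≤ 1) (hy' : ∀ ℓ, y' ℓ ≤ 1)
    (h : ∑ ℓ ∈ range c, y ℓ * 2^(c-1-ℓ) = ∑ ℓ ∈ range c, y' ℓ * 2^(c-1-ℓ)) :
    ∀ ℓ < c, y ℓ = y' ℓ := by
  induction c with
  | zero => omega
  | succ n ih =>
    have h1 := wsum_succ n y
    have h2 := wsum_succ n y'
    simp only [Nat.add_sub_cancel] at h h1 h2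
    rw [h1, h2] at h
    have hyn := hy n
    have hy'n := hy' n
    have hA : ∑ ℓ ∈ range n, y ℓ * 2^(n-1-ℓ) = ∑ ℓ ∈ range n, y' ℓ * 2^(n-1-ℓ) := by omega
    have hn : y n = y' n := by omega
    intro ℓ hℓ
    rcases Nat.lt_succ_iff_lt_or_eq.mp hℓ with h' | rfl
    · exact ih hA ℓ h'
    · exact hn

def yv (m : ℕ) (y : Fin m → ZMod 2) (ℓ : ℕ) : ℕ := if h : ℓ < m then (y ⟨ℓ, h⟩).val else 0

lemma yv_le (m : ℕ) (y : Fin m → ZMod 2) (ℓ : ℕ) : yv m y ℓ ≤ 1 := by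
  unfold yv
  split
  · exact Nat.lt_succ_iff.mp (ZMod.val_lt _)
  · omega

lemma pt_form (m : ℕ) (y : Fin m → ZMod 2) :
    ∑ ℓ : Fin m, ((y ℓ).val : ℝ)/2^(ℓ.1+1)
      = ((∑ ℓ ∈ range m, yv m y ℓ * 2^(m-1-ℓ) : ℕ) : ℝ) / 2^m := by
  have step1 : ∑ ℓ : Fin m, ((y ℓ).val : ℝ)/2^(ℓ.1+1)
      = ∑ ℓ ∈ range m, ((yv m y ℓ : ℝ))/2^(ℓ+1) := by
    rw [← Fin.sum_univ_eq_sum_range (fun ℓ => ((yv m y ℓ : ℝ))/2^(ℓ+1)) m]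
    refine Finset.sum_congr rfl fun ℓ _ => ?_
    simp [yv, ℓ.2]
  rw [step1]
  push_cast
  rw [Finset.sum_div]
  refine Finset.sum_congr rfl fun ℓ hℓ => ?_
  have hℓ' : ℓ < m := Finset.mem_range.mp hℓ
  have h2 : (2:ℝ)^m = 2^(m-1-ℓ) * 2^(ℓ+1) := by rw [← pow_add]; congr 1; omega
  rw [h2]
  field_simp

lemma floor_bits (m c : ℕ) (hc : c ≤ m) (y : Fin m → ZMod 2) :
    ⌊(2:ℝ)^c * ∑ ℓ : Fin m, ((y ℓ).val : ℝ)/2^(ℓ.1+1)⌋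
      = ((∑ ℓ ∈ range c, yv m y ℓ * 2^(c-1-ℓ) : ℕ) : ℤ) := by
  rw [pt_form]
  set n : ℕ := ∑ ℓ ∈ range m, yv m y ℓ * 2^(m-1-ℓ) with hn
  set q : ℕ := ∑ ℓ ∈ range c, yv m y ℓ * 2^(c-1-ℓ) with hq
  have key : (2:ℝ)^c * ((n:ℝ)/2^m) = (n:ℝ) / ((2^(m-c) : ℕ) : ℝ) := by
    push_cast
    have h2 : (2:ℝ)^m = 2^(m-c) * 2^c := by rw [← pow_add]; congr 1; omega
    rw [h2]
    field_simp
  rw [key]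
  have hfl : ⌊(n:ℝ) / ((2^(m-c) : ℕ) : ℝ)⌋ = ((n / 2^(m-c) : ℕ) : ℤ) := by
    rw [← Nat.floor_div_eq_div (K := ℝ) n (2^(m-c)), Int.natCast_floor_eq_floor]
    positivity
  rw [hfl]
  congr 1
  have hsplit : 2^(m-c) * q + (∑ ℓ ∈ Ico c m, yv m y ℓ * 2^(m-1-ℓ)) = n := by
    rw [hn, ← Finset.sum_range_add_sum_Ico _ hc]
    congr 1
    rw [Finset.mul_sum]
    refine Finset.sum_congr rfl fun ℓ hℓ => ?_
    have hℓ' : ℓ < c := Finset.mem_range.mp hℓ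
    have : 2^(m-1-ℓ) = 2^(m-c) * 2^(c-1-ℓ) := by rw [← pow_add]; congr 1; omega
    rw [this]; ring
  have hrem : (∑ ℓ ∈ Ico c m, yv m y ℓ * 2^(m-1-ℓ)) < 2^(m-c) := by
    rw [Finset.sum_Ico_eq_sum_range]
    have := wsum_lt (m - c) (fun p => yv m y (c + p)) (fun p => yv_le m y (c + p))
    calc ∑ p ∈ range (m - c), yv m y (c + p) * 2^(m-1-(c+p))
        = ∑ p ∈ range (m - c), yv m y (c + p) * 2^((m-c)-1-p) := by
          refine Finset.sum_congr rfl fun p hp => ?_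
          have := Finset.mem_range.mp hp
          congr 2
          omega
      _ < 2^(m-c) := this
  have : n / 2^(m-c) = q := by
    rw [← hsplit, Nat.mul_add_div (by positivity), Nat.div_eq_of_lt hrem, Nat.add_zero]
  exact_mod_cast congrArg (Nat.cast : ℕ → ℤ) this

lemma floors_eq_iff (m c : ℕ) (hc : c ≤ m) (y y' : Fin m → ZMod 2) :
    (⌊(2:ℝ)^c * ∑ ℓ : Fin m, ((y ℓ).val : ℝ)/2^(ℓ.1+1)⌋
      = ⌊(2:ℝ)^c * ∑ ℓ : Fin m, ((y' ℓ).val : ℝ)/2^(ℓ.1+1)⌋)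
    ↔ ∀ ℓ : Fin m, ℓ.1 < c → y ℓ = y' ℓ := by
  rw [floor_bits m c hc y, floor_bits m c hc y', Int.natCast_inj]
  constructor
  · intro h ℓ hℓ
    have := wsum_inj c (yv m y) (yv m y') (yv_le m y) (yv_le m y') h ℓ.1 hℓ
    simp only [yv, ℓ.2, dif_pos] at this
    exact ZMod.val_injective 2 (by simpa using this)
  · intro h
    refine Finset.sum_congr rfl fun ℓ hℓ => ?_
    have hℓ' : ℓ < c := Finset.mem_range.mp hℓ
    have hℓm : ℓ < m := lt_of_lt_of_le hℓ' hc
    simp only [yv]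
    rw [dif_pos hℓm, dif_pos hℓm, h ⟨ℓ, hℓm⟩ hℓ']

/-- The dot product of the `r`-th row of `C j` with `w`. -/
def dotr {m s : ℕ} (C : Fin s → Matrix (Fin m) (Fin m) (ZMod 2)) (j : Fin s) (r : ℕ)
    (w : Fin m → ZMod 2) : ZMod 2 := ∑ ℓ, rowAt m (C j) r ℓ * w ℓ

lemma z2eq (a b : ZMod 2) : a = b ↔ a + b = 0 := by revert a b; decide

lemma dotr_mulVec {m s : ℕ} (C : Fin s → Matrix (Fin m) (Fin m) (ZMod 2)) (j : Fin s)
    (ℓ : Fin m) (v : Fin m → ZMod 2) : (C j).mulVec v ℓ = dotr C j ℓ.1 v := by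
  simp [dotr, Matrix.mulVec, dotProduct, rowAt, ℓ.2]

lemma dotr_add {m s : ℕ} (C : Fin s → Matrix (Fin m) (Fin m) (ZMod 2)) (j : Fin s) (r : ℕ)
    (v v' : Fin m → ZMod 2) : dotr C j r (v + v') = dotr C j r v + dotr C j r v' := by
  simp [dotr, mul_add, Finset.sum_add_distrib]

lemma Nf_eq {m s : ℕ} (C : Fin s → Matrix (Fin m) (Fin m) (ZMod 2)) (i i' : ℕ) (j : Fin s)
    (c : ℕ) (hc : c + 1 ≤ m) :
    (Nf (pt C i j) (pt C i' j) c : ℚ) =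
      if (∀ r < c, dotr C j r (bvec m i + bvec m i') = 0)
      then (if dotr C j c (bvec m i + bvec m i') = 0 then 1 else -1)
      else 0 := by
  have key : ∀ c', c' ≤ m →
      ((⌊(2:ℝ)^c' * pt C i j⌋ = ⌊(2:ℝ)^c' * pt C i' j⌋)
        ↔ ∀ r < c', dotr C j r (bvec m i + bvec m i') = 0) := by
    intro c' hc'
    rw [pt, pt, floors_eq_iff m c' hc']
    constructor
    · intro h r hr
      have hrm : r < m := lt_of_lt_of_le hr hc'
      have h1 := h ⟨r, hrm⟩ hr
      rw [z2eq] at h1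
      have h2 : (C j).mulVec (bvec m i + bvec m i') ⟨r, hrm⟩ = 0 := by
        rw [Matrix.mulVec_add]; exact h1
      rw [dotr_mulVec] at h2
      exact h2
    · intro h ℓ hℓ
      have h1 := h ℓ.1 hℓ
      rw [← dotr_mulVec, Matrix.mulVec_add] at h1
      rw [z2eq]
      exact h1
  have k1 := key (c+1) hc
  have k2 := key c (by omega)
  have hsucc : (∀ r < c + 1, dotr C j r (bvec m i + bvec m i') = 0) ↔
      ((∀ r < c, dotr C j r (bvec m i + bvec m i') = 0)
        ∧ dotr C j c (bvec m i + bvec m i') = 0) := by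
    constructor
    · exact fun h => ⟨fun r hr => h r (by omega), h c (by omega)⟩
    · rintro ⟨h1, h2⟩ r hr
      rcases Nat.lt_succ_iff_lt_or_eq.mp hr with h' | rfl
      · exact h1 r h'
      · exact h2
  rw [Nf]
  by_cases hP : ∀ r < c, dotr C j r (bvec m i + bvec m i') = 0
  · by_cases hQ : dotr C j c (bvec m i + bvec m i') = 0
    · rw [if_pos (k1.mpr (hsucc.mpr ⟨hP, hQ⟩)), if_pos hP, if_pos hQ]
      norm_num
    · rw [if_neg (fun h => hQ ((hsucc.mp (k1.mp h)).2)), if_pos (k2.mpr hP),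
        if_pos hP, if_neg hQ]
      norm_num
  · rw [if_neg (fun h => hP ((hsucc.mp (k1.mp h)).1)),
      if_neg (fun h => hP (k2.mp h)), if_neg hP]
    norm_num

def chi (a : ZMod 2) : ℚ := if a = 0 then 1 else -1

lemma chi_add (a b : ZMod 2) : chi (a + b) = chi a * chi b := by
  have h : ∀ x : ZMod 2, x = 0 ∨ x = 1 := by decide
  rcases h a with rfl | rfl <;> rcases h b with rfl | rfl <;>
    simp [chi, show (1 + 1 : ZMod 2) = 0 from by decide]

lemma chi_zero : chi 0 = 1 := rfl

lemma chi_prod {ι : Type*} (u : Finset ι) (f : ι → ZMod 2) :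
    ∏ j ∈ u, chi (f j) = chi (∑ j ∈ u, f j) := by
  induction u using Finset.cons_induction with
  | empty => simp [chi_zero]
  | cons a u ha ih => rw [Finset.prod_cons, Finset.sum_cons, chi_add, ih]

lemma prod_ite_zero {ι : Type*} (u : Finset ι) (P : ι → Prop) [DecidablePred P] (g : ι → ℚ) :
    ∏ j ∈ u, (if P j then g j else 0) = if (∀ j ∈ u, P j) then ∏ j ∈ u, g j else 0 := by
  by_cases h : ∀ j ∈ u, P j
  · rw [if_pos h]
    exact Finset.prod_congr rfl fun j hj => if_pos (h j hj)
  · rw [if_neg h]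
    push_neg at h
    obtain ⟨j, hj, hPj⟩ := h
    exact Finset.prod_eq_zero hj (if_neg hPj)

lemma bvec_xor (m a b : ℕ) : bvec m (a ^^^ b) = bvec m a + bvec m b := by
  funext ℓ
  simp only [bvec, Nat.testBit_xor, Pi.add_apply]
  cases ha : Nat.testBit a ℓ.1 <;> cases hb : Nat.testBit b ℓ.1 <;> simp <;> decide

lemma xor_invol (i d : ℕ) : i ^^^ (i ^^^ d) = d := by
  rw [← Nat.xor_assoc, Nat.xor_self, Nat.zero_xor]

lemma sum_xor (m i : ℕ) (hi : i < 2^m) (f : ℕ → ℚ) :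
    ∑ i' ∈ range (2^m), f (i ^^^ i') = ∑ d ∈ range (2^m), f d := by
  refine Finset.sum_nbij' (fun i' => i ^^^ i') (fun d => i ^^^ d) ?_ ?_ ?_ ?_ ?_
  · intro a ha
    exact Finset.mem_range.mpr (Nat.xor_lt_two_pow hi (Finset.mem_range.mp ha))
  · intro a ha
    exact Finset.mem_range.mpr (Nat.xor_lt_two_pow hi (Finset.mem_range.mp ha))
  · intro a _; exact xor_invol i a
  · intro a _; exact xor_invol i a
  · intro a _; rfl

lemma bvec_injOn (m : ℕ) : ∀ a ∈ range (2^m), ∀ b ∈ range (2^m),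
    bvec m a = bvec m b → a = b := by
  intro a ha b hb h
  apply Nat.eq_of_testBit_eq
  intro ℓ
  by_cases hℓ : ℓ < m
  · have := congrFun h ⟨ℓ, hℓ⟩
    simp only [bvec] at this
    cases hA : Nat.testBit a ℓ <;> cases hB : Nat.testBit b ℓ <;>
      rw [hA, hB] at this <;> simp_all
  · have h2 : (2:ℕ)^m ≤ 2^ℓ := Nat.pow_le_pow_right (by norm_num) (by omega)
    rw [Nat.testBit_lt_two_pow (lt_of_lt_of_le (Finset.mem_range.mp ha) h2),
      Nat.testBit_lt_two_pow (lt_of_lt_of_le (Finset.mem_range.mp hb) h2)]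

lemma sum_bvec (m : ℕ) (G : (Fin m → ZMod 2) → ℚ) :
    ∑ d ∈ range (2^m), G (bvec m d) = ∑ w : Fin m → ZMod 2, G w := by
  have himg : (range (2^m)).image (bvec m) = univ := by
    apply Finset.eq_univ_of_card
    rw [Finset.card_image_of_injOn (fun a ha b hb => bvec_injOn m a ha b hb), card_range]
    simp [Fintype.card_fun]
  conv_rhs => rw [← himg]
  rw [Finset.sum_image (bvec_injOn m)]

lemma exists_sub {ι : Type*} [DecidableEq ι] (u : Finset ι) (f : ι → ℕ) :
    ∀ T, T ≤ ∑ j ∈ u, f j → ∃ g : ι → ℕ, (∀ j ∈ u, g j ≤ f j) ∧ ∑ j ∈ u, g j = T := by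
  induction u using Finset.cons_induction with
  | empty =>
    intro T hT
    simp only [Finset.sum_empty, Nat.le_zero] at hT
    exact ⟨0, by simp, by simp [hT]⟩
  | cons a u ha ih =>
    intro T hT
    rw [Finset.sum_cons] at hT
    obtain ⟨g', hg'le, hg'sum⟩ := ih (min T (∑ j ∈ u, f j)) (min_le_right _ _)
    refine ⟨fun j => if j = a then T - min T (∑ j ∈ u, f j) else g' j, ?_, ?_⟩
    · intro j hj
      rcases Finset.mem_cons.mp hj with rfl | hj'
      · show (if j = j then T - min T (∑ j ∈ u, f j) else g' j) ≤ f j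
        rw [if_pos rfl]; omega
      · show (if j = a then T - min T (∑ j ∈ u, f j) else g' j) ≤ f j
        rw [if_neg (by rintro rfl; exact ha hj')]; exact hg'le j hj'
    · rw [Finset.sum_cons]
      rw [if_pos rfl]
      have hrest : ∑ j ∈ u, (if j = a then T - min T (∑ j ∈ u, f j) else g' j)
          = ∑ j ∈ u, g' j :=
        Finset.sum_congr rfl fun j hj => if_neg (by rintro rfl; exact ha hj)
      rw [hrest, hg'sum]
      omega

/-- rank-nullity counting: solutions of `M.mulVec w = 0`. -/
lemma card_ker {ι : Type*} [Fintype ι] (m : ℕ) (M : Matrix ι (Fin m) (ZMod 2)) :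
    Nat.card {w : Fin m → ZMod 2 // M.mulVec w = 0} = 2 ^ (m - M.rank) := by
  classical
  have hiff : ∀ w : Fin m → ZMod 2, M.mulVec w = 0 ↔ w ∈ LinearMap.ker M.mulVecLin := by
    intro w
    rw [LinearMap.mem_ker, Matrix.mulVecLin_apply]
  have hcongr : Nat.card {w : Fin m → ZMod 2 // M.mulVec w = 0}
      = Nat.card (LinearMap.ker M.mulVecLin) := by
    exact Nat.card_congr (Equiv.subtypeEquivRight hiff)
  rw [hcongr]
  have hdim : M.rank + Module.finrank (ZMod 2) (LinearMap.ker M.mulVecLin) = m := by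
    rw [Matrix.rank, LinearMap.finrank_range_add_finrank_ker]
    simp [Module.finrank_pi]
  have hcard : Nat.card (LinearMap.ker M.mulVecLin)
      = 2 ^ Module.finrank (ZMod 2) (LinearMap.ker M.mulVecLin) := by
    have := Module.card_eq_pow_finrank (K := ZMod 2) (V := LinearMap.ker M.mulVecLin)
    rw [Nat.card_eq_fintype_card, this, ZMod.card]
  rw [hcard]
  congr 1
  omega

/-- full row rank implies surjectivity of `mulVec`. -/
lemma surj_of_rank {ι : Type*} [Fintype ι] (m : ℕ) (M : Matrix ι (Fin m) (ZMod 2))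
    (h : M.rank = Fintype.card ι) : ∀ τ : ι → ZMod 2, ∃ w, M.mulVec w = τ := by
  have htop : LinearMap.range M.mulVecLin = ⊤ := by
    apply Submodule.eq_top_of_finrank_eq
    rw [← Matrix.rank, h, Module.finrank_pi]
  intro τ
  obtain ⟨w, hw⟩ := LinearMap.range_eq_top.mp htop τ
  exact ⟨w, by rw [← Matrix.mulVecLin_apply, hw]⟩

theorem statement (m s : ℕ) (hm : 1 ≤ m) (hs : 1 ≤ s)
    (C : Fin s → Matrix (Fin m) (Fin m) (ZMod 2))
    (t : ℕ) (htm : t ≤ m)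
    (hnet : ∀ u' : Finset (Fin s), u'.Nonempty → ∀ k' : Fin s → ℕ,
      (∀ j ∈ u', k' j ≤ m) → (∑ j ∈ u', k' j) ≤ m - t →
      (stack C u' k').rank = ∑ j ∈ u', k' j)
    (u : Finset (Fin s)) (hu : u.Nonempty)
    (k : Fin s → ℕ) (hk : ∀ j ∈ u, k j ≤ m - 1) :
    Gam C u k ≤ (2 : ℚ) ^ (t + u.card - 1) := by
  classical
  -- the w-level function
  set A : (Fin m → ZMod 2) → Prop := fun w => ∀ j ∈ u, ∀ r < k j, dotr C j r w = 0 with hA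
  set D : (Fin m → ZMod 2) → ZMod 2 := fun w => ∑ j ∈ u, dotr C j (k j) w with hD
  set F : (Fin m → ZMod 2) → ℚ := fun w => if A w then chi (D w) else 0 with hF
  -- Step 1 : Gam = ∑ w, F w
  have hGam : Gam C u k = ∑ w : Fin m → ZMod 2, F w := by
    have hprod : ∀ i i' : ℕ,
        ∏ j ∈ u, (Nf (pt C i j) (pt C i' j) (k j) : ℚ) = F (bvec m i + bvec m i') := by
      intro i i'
      have : ∀ j ∈ u, (Nf (pt C i j) (pt C i' j) (k j) : ℚ)
          = (if (∀ r < k j, dotr C j r (bvec m i + bvec m i') = 0)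
             then chi (dotr C j (k j) (bvec m i + bvec m i')) else 0) := by
        intro j hj
        rw [Nf_eq C i i' j (k j) (by have := hk j hj; omega)]
        rfl
      rw [Finset.prod_congr rfl this, prod_ite_zero, hF]
      simp only [hA, hD]
      rw [chi_prod]
      by_cases hcon : ∀ j ∈ u, ∀ r < k j, dotr C j r (bvec m i + bvec m i') = 0
      · rw [if_pos hcon, if_pos hcon]
      · rw [if_neg hcon, if_neg hcon]
    have hinner : ∀ i ∈ range (2^m),
        ∑ i' ∈ range (2^m), ∏ j ∈ u, (Nf (pt C i j) (pt C i' j) (k j) : ℚ)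
          = ∑ w : Fin m → ZMod 2, F w := by
      intro i hi
      have e1 : ∀ i', ∏ j ∈ u, (Nf (pt C i j) (pt C i' j) (k j) : ℚ)
          = (fun d => F (bvec m d)) (i ^^^ i') := by
        intro i'
        rw [hprod i i', ← bvec_xor]
      calc ∑ i' ∈ range (2^m), ∏ j ∈ u, (Nf (pt C i j) (pt C i' j) (k j) : ℚ)
          = ∑ i' ∈ range (2^m), (fun d => F (bvec m d)) (i ^^^ i') :=
            Finset.sum_congr rfl fun i' _ => e1 i'
        _ = ∑ d ∈ range (2^m), F (bvec m d) :=
            sum_xor m i (Finset.mem_range.mp hi) (fun d => F (bvec m d))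
        _ = ∑ w : Fin m → ZMod 2, F w := sum_bvec m F
    rw [Gam, Finset.sum_congr rfl hinner, Finset.sum_const, card_range, nsmul_eq_mul]
    push_cast
    rw [← mul_assoc, inv_mul_cancel₀ (by positivity : ((2:ℚ)^m) ≠ 0), one_mul]
  rw [hGam]
  by_cases hcase : (∑ j ∈ u, k j) + u.card ≤ m - t
  -- Case 1: the sum vanishes
  · set k' : Fin s → ℕ := fun j => k j + 1 with hk'
    have hsum' : ∑ j ∈ u, k' j = (∑ j ∈ u, k j) + u.card := by
      rw [hk']
      rw [Finset.sum_add_distrib, Finset.sum_const, smul_eq_mul, mul_one]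
    have hk'eq : ∀ j, k' j = k j + 1 := fun j => rfl
    have hrank := hnet u hu k' (fun j hj => by have := hk j hj; rw [hk'eq]; omega)
      (by rw [hsum']; exact hcase)
    have hcardidx : Fintype.card ((j : {x // x ∈ u}) × Fin (k' j.1)) = ∑ j ∈ u, k' j := by
      rw [Fintype.card_sigma]
      simp only [Fintype.card_fin]
      exact Finset.sum_coe_sort u k'
    obtain ⟨j₀, hj₀⟩ := hu
    set τ : ((j : {x // x ∈ u}) × Fin (k' j.1)) → ZMod 2 :=
      fun p => if p.1.1 = j₀ ∧ p.2.1 = k j₀ then 1 else 0 with hτ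
    obtain ⟨w₀, hw₀⟩ := surj_of_rank m (stack C u k') (by rw [hrank, hcardidx]) τ
    have hmv : ∀ (j : Fin s) (hj : j ∈ u) (r : ℕ) (hr : r < k' j),
        dotr C j r w₀ = τ ⟨⟨j, hj⟩, ⟨r, hr⟩⟩ := by
      intro j hj r hr
      have := congrFun hw₀ ⟨⟨j, hj⟩, ⟨r, hr⟩⟩
      exact this
    have hA0 : A w₀ := by
      intro j hj r hr
      rw [hmv j hj r (by rw [hk'eq]; omega)]
      rw [hτ]
      simp only
      rw [if_neg]
      rintro ⟨h1, h2⟩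
      rw [h1] at hr
      omega
    have hD0 : D w₀ = 1 := by
      rw [hD]
      simp only
      have : ∀ j ∈ u, dotr C j (k j) w₀ = if j = j₀ then 1 else 0 := by
        intro j hj
        rw [hmv j hj (k j) (by rw [hk'eq]; omega), hτ]
        simp only
        by_cases hjj : j = j₀
        · subst hjj; rw [if_pos ⟨rfl, rfl⟩, if_pos rfl]
        · rw [if_neg (by rintro ⟨h1, _⟩; exact hjj h1), if_neg hjj]
      rw [Finset.sum_congr rfl this, Finset.sum_ite_eq' u j₀ (fun _ => (1 : ZMod 2)),
        if_pos hj₀]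
    have hw₀w₀ : ∀ w : Fin m → ZMod 2, w + w₀ + w₀ = w := by
      intro w
      funext ℓ
      simp only [Pi.add_apply]
      have : w₀ ℓ + w₀ ℓ = 0 := by
        have h : ∀ x : ZMod 2, x + x = 0 := by decide
        exact h _
      rw [add_assoc, this, add_zero]
    have hAadd : ∀ v v', A v → A v' → A (v + v') := by
      intro v v' hv hv' j hj r hr
      rw [dotr_add, hv j hj r hr, hv' j hj r hr, add_zero]
    have hAiff : ∀ w, A (w + w₀) ↔ A w := by
      intro w
      constructor
      · intro h
        have := hAadd _ _ h hA0
        rwa [hw₀w₀] at this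
      · intro h
        exact hAadd _ _ h hA0
    have hDadd : ∀ w, D (w + w₀) = D w + 1 := by
      intro w
      rw [hD]
      simp only
      rw [← hD0, hD]
      simp only
      rw [← Finset.sum_add_distrib]
      exact Finset.sum_congr rfl fun j hj => dotr_add C j (k j) w w₀
    have hFneg : ∀ w, F (w + w₀) = -F w := by
      intro w
      rw [hF]
      simp only
      by_cases hw : A w
      · rw [if_pos ((hAiff w).mpr hw), if_pos hw, hDadd, chi_add]
        have : chi 1 = -1 := rfl
        rw [this]
        ring
      · rw [if_neg (fun h => hw ((hAiff w).mp h)), if_neg hw, neg_zero]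
    have hzero : ∑ w : Fin m → ZMod 2, F w = 0 := by
      have hbij : Function.Bijective (fun w : Fin m → ZMod 2 => w + w₀) := by
        constructor
        · intro a b hab
          have := congrArg (fun v => v + w₀) hab
          simpa [hw₀w₀] using this
        · intro w
          exact ⟨w + w₀, hw₀w₀ w⟩
      have h1 : ∑ w : Fin m → ZMod 2, F w = ∑ w : Fin m → ZMod 2, F (w + w₀) :=
        (Fintype.sum_bijective _ hbij _ _ (fun w => rfl)).symm
      have h2 : ∑ w : Fin m → ZMod 2, F (w + w₀) = -∑ w : Fin m → ZMod 2, F w := by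
        rw [← Finset.sum_neg_distrib]
        exact Finset.sum_congr rfl fun w _ => hFneg w
      have := h1.trans h2
      linarith
    rw [hzero]
    positivity
  -- Case 2: counting bound
  · push_neg at hcase
    set T : ℕ := min (∑ j ∈ u, k j) (m - t) with hT
    obtain ⟨k'', hk''le, hk''sum⟩ := exists_sub u k T (min_le_left _ _)
    have hrank := hnet u hu k''
      (fun j hj => le_trans (hk''le j hj) (le_trans (hk j hj) (by omega)))
      (by rw [hk''sum]; exact min_le_right _ _)
    rw [hk''sum] at hrank
    set M := stack C u k'' with hM
    set A'' : (Fin m → ZMod 2) → Prop := fun w => ∀ j ∈ u, ∀ r < k'' j, dotr C j r w = 0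
      with hA''
    have hbound : ∀ w, F w ≤ (if A'' w then (1:ℚ) else 0) := by
      intro w
      rw [hF]
      simp only
      by_cases hw : A w
      · have hw'' : A'' w := fun j hj r hr => hw j hj r (lt_of_lt_of_le hr (hk''le j hj))
        rw [if_pos hw, if_pos hw'']
        rw [chi]
        split <;> norm_num
      · rw [if_neg hw]
        split <;> norm_num
    have hkerM : ∀ w : Fin m → ZMod 2, A'' w ↔ M.mulVec w = 0 := by
      intro w
      constructor
      · intro h
        funext p
        exact h p.1.1 p.1.2 p.2.1 p.2.2
      · intro h j hj r hr
        exact congrFun h ⟨⟨j, hj⟩, ⟨r, hr⟩⟩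
    have hsum_le : ∑ w : Fin m → ZMod 2, F w
        ≤ ∑ w : Fin m → ZMod 2, (if A'' w then (1:ℚ) else 0) :=
      Finset.sum_le_sum fun w _ => hbound w
    have hcount : ∑ w : Fin m → ZMod 2, (if A'' w then (1:ℚ) else 0)
        = ((Nat.card {w : Fin m → ZMod 2 // M.mulVec w = 0} : ℕ) : ℚ) := by
      rw [Finset.sum_boole]
      congr 1
      rw [Nat.card_eq_fintype_card, Fintype.card_subtype]
      congr 1
      apply Finset.filter_congr
      intro w _
      simp only [hkerM w]
    have hle2 : Nat.card {w : Fin m → ZMod 2 // M.mulVec w = 0} = 2 ^ (m - T) := by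
      rw [card_ker, hrank]
    have hexp : m - T ≤ t + u.card - 1 := by
      have hcard : 1 ≤ u.card := Finset.card_pos.mpr hu
      omega
    calc ∑ w : Fin m → ZMod 2, F w
        ≤ ((Nat.card {w : Fin m → ZMod 2 // M.mulVec w = 0} : ℕ) : ℚ) := by
          rw [← hcount]; exact hsum_le
      _ = (2:ℚ) ^ (m - T) := by rw [hle2]; push_cast; ring
      _ ≤ (2:ℚ) ^ (t + u.card - 1) := by
          apply pow_le_pow_right₀ (by norm_num) hexp

end
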